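/- Define H(v, v₊) := v(v - 1 + a(v^{-γ} - 1)) with a := v₊^γ(1 - v₊)/(1 - v₊^γ). For γ ≥ 1 and v₊ ≤ v < 1, the identity H(v, v₊) = (v - v₊)·(v - ((1 - v₊)/(1 - v₊^γ))·((1 - (v₊/v)^γ)/(1 - v₊/v))) holds, and consequently (v - γ)(v - v₊) ≤ H(v, v₊) ≤ (v - (1 - v₊))(v - v₊). -/

import Mathlib

theorem stmt_9 (γ vp : ℝ) (hγ : 1 ≤ γ) (hv0 : 0 < vp) (hv1 : vp < 1)
    (a : ℝ) (ha : a = vp ^ γ * (1 - vp) / (1 - vp ^ γ))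
    (H : ℝ → ℝ) (hH : H = fun v => v * (v - 1 + a * (v ^ (-γ) - 1))) :
    ∀ v : ℝ, vp ≤ v → v < 1 →
      H v = (v - vp) * (v - ((1 - vp) / (1 - vp ^ γ)) * ((1 - (vp / v) ^ γ) / (1 - vp / v))) ∧
      (v - γ) * (v - vp) ≤ H v ∧ H v ≤ (v - (1 - vp)) * (v - vp) := by
  intro v hvp hvlt1
  have hv : 0 < v := lt_of_lt_of_le hv0 hvp
  have hγ0 : 0 < γ := lt_of_lt_of_le one_pos hγ
  have hvpγ_pos : 0 < vp ^ γ := Real.rpow_pos_of_pos hv0 γ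
  have hvpγ_le : vp ^ γ ≤ vp := by
    calc vp ^ γ ≤ vp ^ (1:ℝ) := Real.rpow_le_rpow_of_exponent_ge hv0 hv1.le hγ
    _ = vp := Real.rpow_one vp
  have hvpγ_lt1 : vp ^ γ < 1 := lt_of_le_of_lt hvpγ_le hv1
  have hden : (0:ℝ) < 1 - vp ^ γ := by linarith
  have hvγ_pos : 0 < v ^ γ := Real.rpow_pos_of_pos hv γ
  rcases eq_or_lt_of_le hvp with heq | hlt
  · -- v = vp
    have h0 : H v = 0 := by
      rw [hH, ← heq]
      simp only
      rw [Real.rpow_neg hv0.le, ha]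
      field_simp
      ring
    rw [h0, ← heq]
    refine ⟨by simp, by simp, by simp⟩
  · -- vp < v
    have hvneg : v ^ (-γ) = (v ^ γ)⁻¹ := Real.rpow_neg hv.le γ
    have hdiv : (vp / v) ^ γ = vp ^ γ / v ^ γ := Real.div_rpow hv0.le hv.le γ
    have hsub : (0:ℝ) < 1 - vp / v := by
      rw [sub_pos, div_lt_one hv]; exact hlt
    have hvvp : v - vp ≠ 0 := sub_ne_zero.mpr hlt.ne'
    have hrw : 1 - vp / v = (v - vp) / v := by field_simp
    have hid : H v = (v - vp) *
        (v - ((1 - vp) / (1 - vp ^ γ)) * ((1 - (vp / v) ^ γ) / (1 - vp / v))) := by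
      rw [hH]
      simp only
      rw [hvneg, ha, hdiv, hrw, div_div_eq_mul_div]
      field_simp
      ring
    refine ⟨hid, ?_, ?_⟩ <;>
    · set x := vp / v with hxdef
      have hx0 : 0 < x := div_pos hv0 hv
      have hx1 : x < 1 := by rw [hxdef, div_lt_one hv]; exact hlt
      have hxγ_le : x ^ γ ≤ x := by
        calc x ^ γ ≤ x ^ (1:ℝ) := Real.rpow_le_rpow_of_exponent_ge hx0 hx1.le hγ
        _ = x := Real.rpow_one x
      have hg_ge : 1 ≤ (1 - x ^ γ) / (1 - x) := by
        rw [le_div_iff₀ hsub]; linarith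
      have hbern0 := one_add_mul_self_le_rpow_one_add (s := x - 1) (by linarith) hγ
      have hx' : (1:ℝ) + (x - 1) = x := by ring
      rw [hx'] at hbern0
      have hg_le : (1 - x ^ γ) / (1 - x) ≤ γ := by
        rw [div_le_iff₀ hsub]; nlinarith
      have hg_nonneg : (0:ℝ) ≤ (1 - x ^ γ) / (1 - x) := le_trans zero_le_one hg_ge
      have hc_le : (1 - vp) / (1 - vp ^ γ) ≤ 1 := by
        rw [div_le_one hden]; linarith
      have hc_ge : 1 - vp ≤ (1 - vp) / (1 - vp ^ γ) := by
        rw [le_div_iff₀ hden]; nlinarith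
      have hcg_le : ((1 - vp) / (1 - vp ^ γ)) * ((1 - x ^ γ) / (1 - x)) ≤ γ := by
        calc ((1 - vp) / (1 - vp ^ γ)) * ((1 - x ^ γ) / (1 - x)) ≤ 1 * γ :=
              mul_le_mul hc_le hg_le hg_nonneg one_pos.le
        _ = γ := one_mul γ
      have hcg_ge : 1 - vp ≤ ((1 - vp) / (1 - vp ^ γ)) * ((1 - x ^ γ) / (1 - x)) := by
        calc 1 - vp = (1 - vp) * 1 := (mul_one _).symm
        _ ≤ ((1 - vp) / (1 - vp ^ γ)) * ((1 - x ^ γ) / (1 - x)) :=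
              mul_le_mul hc_ge hg_ge one_pos.le (div_nonneg (by linarith) hden.le)
      first
      | · rw [hid, mul_comm]
          exact mul_le_mul_of_nonneg_left (by linarith) (by linarith)
      | · rw [hid, mul_comm (v - (1 - vp))]
          exact mul_le_mul_of_nonneg_left (by linarith) (by linarith)
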